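/- Let a_1,…,a_r > 0 and suppose for each i we have nonnegative reals e(i)_0,…,e(i)_d satisfying the log-concavity inequalities e(i)_j² ≤ e(i)_{j−1}e(i)_{j+1} for 1 ≤ j ≤ d−1. Set e_j = Σ_i a_i e(i)_j and suppose there is ξ > 0 with e_{j+1} = ξ e_j for all 0 ≤ j ≤ d−1. Then for each i and each 1 < j < d: e(i)_{j+1}^{1/2} = ξ · e(i)_{j−1}^{1/2} and e(i)_j² = e(i)_{j−1} e(i)_{j+1}. Consequently, for each i, either e(i)_j = 0 for all j, or e(i)_j > 0 for all j and e(i)_{j+1}/e(i)_j = ξ for all j. -/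
import Mathlib


/-- Let `a_1, …, a_r > 0` and, for each `i`, nonnegative reals
`e(i)_0, …, e(i)_d` satisfying log-concavity `e(i)_j² ≤ e(i)_{j−1} e(i)_{j+1}` for
`1 ≤ j ≤ d−1`.  Set `E_j = Σ_i a_i e(i)_j` and suppose `ξ > 0` satisfies `E_{j+1} = ξ E_j`
for all `0 ≤ j ≤ d−1`.  Then for each `i` and each `1 < j < d`:
`√(e(i)_{j+1}) = ξ √(e(i)_{j−1})` and `e(i)_j² = e(i)_{j−1} e(i)_{j+1}`.  Consequently,
for each `i`, either `e(i)_j = 0` for all `j ≤ d`, or `e(i)_j > 0` for all `j ≤ d` and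
`e(i)_{j+1} = ξ e(i)_j` for all `j < d`. -/
theorem componentwise_geometric_lemma
    (d : ℕ) (hd : 2 ≤ d) (r : ℕ) (a : Fin r → ℝ) (ha : ∀ i, 0 < a i)
    (e : Fin r → ℕ → ℝ) (hnonneg : ∀ i j, j ≤ d → 0 ≤ e i j)
    (hlogconcave : ∀ (i : Fin r) (j : ℕ), 1 ≤ j → j ≤ d - 1 →
      e i j ^ 2 ≤ e i (j - 1) * e i (j + 1))
    (ξ : ℝ) (hξ : 0 < ξ)
    (hgeo : ∀ j : ℕ, j < d → (∑ i, a i * e i (j + 1)) = ξ * ∑ i, a i * e i j) :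
    (∀ (i : Fin r) (j : ℕ), 1 < j → j < d →
      Real.sqrt (e i (j + 1)) = ξ * Real.sqrt (e i (j - 1)) ∧
      e i j ^ 2 = e i (j - 1) * e i (j + 1)) ∧
    (∀ i : Fin r, (∀ j, j ≤ d → e i j = 0) ∨
      ((∀ j, j ≤ d → 0 < e i j) ∧ ∀ j, j < d → e i (j + 1) = ξ * e i j)) := by
  have key : ∀ k : ℕ, k + 2 ≤ d → ∀ i : Fin r,
      e i (k+1) = ξ * e i k ∧ e i (k+2) = ξ^2 * e i k := by
    intro k hk
    have hfacts : ∀ i : Fin r,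
        e i (k+1) ≤ Real.sqrt (e i k) * Real.sqrt (e i (k+2)) ∧
        0 ≤ e i (k+2) - 2*ξ*e i (k+1) + ξ^2 * e i k := by
      intro i
      have h0 := hnonneg i k (by omega)
      have h1 := hnonneg i (k+1) (by omega)
      have h2 := hnonneg i (k+2) (by omega)
      have hlc : e i (k+1) ^ 2 ≤ e i k * e i (k+2) := by
        have h := hlogconcave i (k+1) (by omega) (by omega)
        simpa using h
      have hst : e i (k+1) ≤ Real.sqrt (e i k) * Real.sqrt (e i (k+2)) := by
        calc e i (k+1) = Real.sqrt (e i (k+1) ^ 2) := (Real.sqrt_sq h1).symm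
          _ ≤ Real.sqrt (e i k * e i (k+2)) := Real.sqrt_le_sqrt hlc
          _ = Real.sqrt (e i k) * Real.sqrt (e i (k+2)) := Real.sqrt_mul h0 _
      refine ⟨hst, ?_⟩
      nlinarith [sq_nonneg (Real.sqrt (e i (k+2)) - ξ * Real.sqrt (e i k)),
        Real.sq_sqrt h0, Real.sq_sqrt h2, hξ.le, hst]
    have hsum : ∑ i, a i * (e i (k+2) - 2*ξ*e i (k+1) + ξ^2 * e i k) = 0 := by
      have h1 := hgeo (k+1) (by omega)
      have h2 := hgeo k (by omega)
      have expand : ∑ i, a i * (e i (k+2) - 2*ξ*e i (k+1) + ξ^2 * e i k)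
          = (∑ i, a i * e i (k+2)) - 2*ξ*(∑ i, a i * e i (k+1))
            + ξ^2 * (∑ i, a i * e i k) := by
        rw [Finset.mul_sum, Finset.mul_sum, ← Finset.sum_sub_distrib,
          ← Finset.sum_add_distrib]
        exact Finset.sum_congr rfl fun i _ => by ring
      rw [expand, h1, h2]
      ring
    have hzero := (Finset.sum_eq_zero_iff_of_nonneg
      (fun i _ => mul_nonneg (ha i).le (hfacts i).2)).mp hsum
    intro i
    have hq : e i (k+2) - 2*ξ*e i (k+1) + ξ^2 * e i k = 0 := by
      rcases mul_eq_zero.mp (hzero i (Finset.mem_univ i)) with h | h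
      · exact absurd h (ha i).ne'
      · exact h
    have h0 := hnonneg i k (by omega)
    have h2 := hnonneg i (k+2) (by omega)
    have hst := (hfacts i).1
    have hsq : (Real.sqrt (e i (k+2)) - ξ * Real.sqrt (e i k))^2 = 0 := by
      have hle : (Real.sqrt (e i (k+2)) - ξ * Real.sqrt (e i k))^2 ≤ 0 := by
        nlinarith [Real.sq_sqrt h0, Real.sq_sqrt h2, hξ.le]
      exact le_antisymm hle (sq_nonneg _)
    have ht : Real.sqrt (e i (k+2)) = ξ * Real.sqrt (e i k) := by
      have := pow_eq_zero_iff (n := 2) (by norm_num) |>.mp hsq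
      linarith [sub_eq_zero.mp this]
    have he2 : e i (k+2) = ξ^2 * e i k := by
      calc e i (k+2) = Real.sqrt (e i (k+2)) ^ 2 := (Real.sq_sqrt h2).symm
        _ = (ξ * Real.sqrt (e i k)) ^ 2 := by rw [ht]
        _ = ξ^2 * e i k := by rw [mul_pow, Real.sq_sqrt h0]
    have he1 : e i (k+1) = ξ * e i k := by
      have h2ξ : (2*ξ : ℝ) ≠ 0 := by positivity
      apply mul_left_cancel₀ h2ξ
      linear_combination he2 - hq
    exact ⟨he1, he2⟩
  constructor
  · intro i j hj1 hjd
    obtain ⟨k, rfl⟩ : ∃ k, j = k + 2 := ⟨j - 2, by omega⟩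
    have e2 : e i (k + 2) = ξ * e i (k + 1) := (key (k+1) (by omega) i).1
    have e3 : e i (k + 2 + 1) = ξ ^ 2 * e i (k + 1) := (key (k+1) (by omega) i).2
    constructor
    · have h1 : (0:ℝ) ≤ e i (k+1) := hnonneg i (k+1) (by omega)
      show Real.sqrt (e i (k+2+1)) = ξ * Real.sqrt (e i (k+1))
      rw [e3, show ξ^2 * e i (k+1) = (ξ * Real.sqrt (e i (k+1)))^2 by
        rw [mul_pow, Real.sq_sqrt h1]]
      exact Real.sqrt_sq (by positivity)
    · show e i (k+2) ^ 2 = e i (k+1) * e i (k+2+1)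
      rw [e2, e3]; ring
  · intro i
    have ratio : ∀ k, k < d → e i (k+1) = ξ * e i k := by
      intro k hkd
      by_cases hk2 : k + 2 ≤ d
      · exact (key k hk2 i).1
      · obtain ⟨m, rfl⟩ : ∃ m, k = m + 1 := ⟨k - 1, by omega⟩
        have hm : m + 2 ≤ d := by omega
        show e i (m+2) = ξ * e i (m+1)
        rw [(key m hm i).2, (key m hm i).1]; ring
    by_cases h0 : e i 0 = 0
    · left
      intro j
      induction j with
      | zero => intro _; exact h0
      | succ n ih =>
        intro hj
        rw [ratio n (by omega), ih (by omega), mul_zero]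
    · right
      have h0' : 0 < e i 0 := lt_of_le_of_ne (hnonneg i 0 (by omega)) (Ne.symm h0)
      have pos : ∀ j, j ≤ d → 0 < e i j := by
        intro j
        induction j with
        | zero => intro _; exact h0'
        | succ n ih =>
          intro hj
          rw [ratio n (by omega)]
          exact mul_pos hξ (ih (by omega))
      exact ⟨pos, fun j hj => ratio j hj⟩
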